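/- There exist an open interval I ⊆ (0,∞) containing 1 and a real analytic function Z : I → ℝ such that r·Z'(r)·P̂(Z(r)) + Q̂(Z(r)) = 0 for all r ∈ I and Z(1) = 0; any such Z satisfies Z'(1) = −1; and I and Z can be chosen so that in addition Z'(r) < 0 and P̂(Z(r)) > 0 for all r ∈ I, and Z(r) > 0 for all r ∈ I ∩ (0,1). -/

import Mathlib

open Polynomial Set

open Filter
open scoped Topology

lemma hat_eq_reflect (R Rhat : Polynomial ℝ) (N : ℕ) (hdeg : R.natDegree ≤ N)
    (h : ∀ x : ℝ, x ≠ 0 → Rhat.eval x = x ^ N * R.eval (1 / x)) :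
    Rhat = R.reflect N := by
  apply Polynomial.eq_of_infinite_eval_eq
  apply Set.Infinite.mono (s := {(0:ℝ)}ᶜ)
  · intro y hy
    have hy' : y ≠ 0 := hy
    letI := invertibleOfNonzero (inv_ne_zero hy')
    have h2 := Polynomial.eval₂_reflect_mul_pow (RingHom.id ℝ) y⁻¹ N R hdeg
    rw [invOf_eq_inv, inv_inv] at h2
    have h2' : eval y (reflect N R) * (y⁻¹) ^ N = eval y⁻¹ R := h2
    have : Rhat.eval y = y ^ N * R.eval (1/y) := h y hy'
    simp only [Set.mem_setOf_eq, this, one_div]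
    rw [← h2']
    field_simp
    rw [mul_comm (y^N), mul_assoc, ← mul_pow, mul_one_div_cancel hy', one_pow, mul_one]
  · exact Set.Finite.infinite_compl (Set.finite_singleton 0)

lemma hat_eval_zero (R Rhat : Polynomial ℝ) (N : ℕ) (hdeg : R.natDegree ≤ N)
    (h : ∀ x : ℝ, x ≠ 0 → Rhat.eval x = x ^ N * R.eval (1 / x)) :
    Rhat.eval 0 = R.coeff N := by
  rw [hat_eq_reflect R Rhat N hdeg h, ← Polynomial.coeff_zero_eq_eval_zero,
    Polynomial.coeff_reflect]
  simp [Polynomial.revAt_le (Nat.zero_le N)]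

lemma Q_facts (m : ℕ) (hm : 2 ≤ m) (P Q : Polynomial ℝ) (hPmon : P.Monic)
    (hPdeg : P.natDegree = m - 1)
    (hQ : ∀ y : ℝ, (derivative Q).eval y = ((m : ℝ) + 1) * y * P.eval y) :
    Q.natDegree ≤ m + 1 ∧ Q.coeff (m + 1) = 1 := by
  have hD : derivative Q = C ((m : ℝ) + 1) * X * P := by
    apply Polynomial.funext
    intro y
    rw [hQ y]
    simp [mul_assoc]
  have hDdeg : (derivative Q).natDegree ≤ m := by
    rw [hD]
    calc (C ((m : ℝ) + 1) * X * P).natDegree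
        ≤ (C ((m : ℝ) + 1) * X).natDegree + P.natDegree := natDegree_mul_le
      _ ≤ 1 + (m - 1) := by
          gcongr
          · calc (C ((m : ℝ) + 1) * X).natDegree ≤ (C ((m:ℝ)+1)).natDegree + X.natDegree :=
                natDegree_mul_le
              _ ≤ 1 := by rw [natDegree_C, natDegree_X]
          · exact le_of_eq hPdeg
      _ ≤ m := by omega
  have hPc : P.coeff (m - 1) = 1 := by
    have := hPmon.coeff_natDegree
    rwa [hPdeg] at this
  have hcoeff : Q.coeff (m + 1) = 1 := by
    have h1 : (derivative Q).coeff m = Q.coeff (m + 1) * ((m : ℝ) + 1) := by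
      rw [coeff_derivative]
    have h2 : (derivative Q).coeff m = ((m : ℝ) + 1) := by
      rw [hD, mul_assoc, coeff_C_mul]
      have hm1 : m = (m - 1) + 1 := by omega
      rw [hm1, coeff_X_mul, hPc, mul_one]
    have hne : ((m : ℝ) + 1) ≠ 0 := by positivity
    rw [h2] at h1
    exact mul_right_cancel₀ hne (h1.symm.trans (one_mul _).symm)
  refine ⟨?_, hcoeff⟩
  rw [Polynomial.natDegree_le_iff_coeff_eq_zero]
  intro k hk
  have hk0 : k ≠ 0 := by omega
  obtain ⟨j, rfl⟩ : ∃ j, k = j + 1 := ⟨k - 1, by omega⟩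
  have h1 : (derivative Q).coeff j = Q.coeff (j + 1) * ((j : ℝ) + 1) := coeff_derivative Q j
  have h2 : (derivative Q).coeff j = 0 := by
    apply coeff_eq_zero_of_natDegree_lt
    omega
  have hne : ((j : ℝ) + 1) ≠ 0 := by positivity
  rw [h2] at h1
  have := (mul_eq_zero.mp h1.symm).resolve_right hne
  exact this

lemma exists_antideriv {g : ℝ → ℝ} (hg : AnalyticAt ℝ g 0) :
    ∃ F : ℝ → ℝ, AnalyticAt ℝ F 0 ∧ F 0 = 0 ∧
      ∀ᶠ y in 𝓝 (0:ℝ), HasDerivAt F (g y) y := by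
  obtain ⟨p, hp⟩ := hg
  obtain ⟨r, hr⟩ := hp
  classical
  set c : ℕ → ℝ := fun n => match n with
    | 0 => 0
    | k + 1 => p.coeff k / (k + 1) with hc
  set q : FormalMultilinearSeries ℝ ℝ ℝ :=
    fun n => ContinuousMultilinearMap.mkPiRing ℝ (Fin n) (c n) with hq
  have hqcoeff : ∀ n, q.coeff n = c n := by
    intro n
    simp [hq, FormalMultilinearSeries.coeff, ContinuousMultilinearMap.mkPiRing_apply]
  have hqnorm : ∀ n, ‖q n‖ = ‖c n‖ := fun n => ContinuousMultilinearMap.norm_mkPiRing (c n)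
  have hrad : r ≤ q.radius := by
    apply ENNReal.le_of_forall_nnreal_lt
    intro ρ hρ
    obtain ⟨C, hC0, hC⟩ := p.norm_mul_pow_le_of_lt_radius (hρ.trans_le hr.r_le)
    apply q.le_radius_of_bound (C * ρ)
    intro n
    match n with
    | 0 =>
      simp only [hqnorm, pow_zero, mul_one]
      have h0 : ‖c 0‖ = 0 := by simp [hc]
      rw [h0]
      positivity
    | n + 1 =>
      have h1 : ‖q (n+1)‖ = ‖p.coeff n / ((n:ℝ)+1)‖ := by rw [hqnorm]
      have h2 : ‖p.coeff n / ((n:ℝ)+1)‖ ≤ ‖p.coeff n‖ := by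
        rw [norm_div]
        apply div_le_self (norm_nonneg _)
        rw [Real.norm_eq_abs, abs_of_nonneg (by positivity)]
        have : (0:ℝ) ≤ (n:ℝ) := Nat.cast_nonneg n
        linarith
      have h3 : ‖p n‖ = ‖p.coeff n‖ := FormalMultilinearSeries.norm_apply_eq_norm_coef
      calc ‖q (n+1)‖ * (ρ:ℝ) ^ (n+1)
          ≤ ‖p.coeff n‖ * (ρ:ℝ)^(n+1) := by rw [h1]; gcongr
          _ = (‖p n‖ * (ρ:ℝ)^n) * ρ := by rw [h3]; ring
          _ ≤ C * ρ := mul_le_mul (hC n) le_rfl ρ.2 hC0.le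
  have hqrad : 0 < q.radius := lt_of_lt_of_le hr.r_pos hrad
  set F := q.sum with hFdef
  have hF : HasFPowerSeriesOnBall F q 0 r :=
    (q.hasFPowerSeriesOnBall hqrad).mono hr.r_pos hrad
  have hF0 : F 0 = 0 := by
    have h := hF.coeff_zero (fun _ => 1)
    rw [← h]
    simp [hq, ContinuousMultilinearMap.mkPiRing_apply, hc]
  refine ⟨F, hF.hasFPowerSeriesAt.analyticAt, hF0, ?_⟩
  have hball : EMetric.ball (0:ℝ) r ∈ 𝓝 (0:ℝ) := EMetric.ball_mem_nhds 0 hr.r_pos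
  filter_upwards [hball] with y hy
  have hdiff : DifferentiableAt ℝ F y := (hF.analyticAt_of_mem hy).differentiableAt
  have hderiv : deriv F y = g y := by
    by_cases hy0 : y = 0
    · subst hy0
      have h1 : deriv F 0 = q.coeff 1 := hF.hasFPowerSeriesAt.deriv
      have h2 : g 0 = p.coeff 0 := by
        have h := hr.hasFPowerSeriesAt.coeff_zero (fun _ => 1)
        rw [← h, FormalMultilinearSeries.apply_eq_prod_smul_coeff]
        simp
      rw [h1, h2, hqcoeff]
      simp [hc]
    · have hdF := hF.fderiv
      have hsum1 := hdF.hasSum hy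
      have hsum2 := hsum1.mapL (ContinuousLinearMap.apply ℝ ℝ (1:ℝ))
      have hterm : ∀ n, (ContinuousLinearMap.apply ℝ ℝ (1:ℝ)) (q.derivSeries n (fun _ => y))
          = p n (fun _ => y) := by
        intro n
        rw [ContinuousLinearMap.apply_apply]
        have h1 : (1:ℝ) = y⁻¹ • y := by rw [smul_eq_mul, inv_mul_cancel₀ hy0]
        rw [h1, ContinuousLinearMap.map_smul, FormalMultilinearSeries.derivSeries_apply_diag,
          FormalMultilinearSeries.apply_eq_pow_smul_coeff,
          FormalMultilinearSeries.apply_eq_pow_smul_coeff, hqcoeff]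
        have hne : ((n:ℝ)+1) ≠ 0 := by positivity
        simp only [hc, smul_eq_mul, nsmul_eq_mul]
        push_cast
        field_simp
        ring
      have hsum2' : HasSum (fun n => p n (fun _ => y)) ((fderiv ℝ F (0 + y)) 1) := by
        simpa only [ContinuousLinearMap.apply_apply, hterm] using hsum2
      have hsum3 : HasSum (fun n => p n (fun _ => y)) (g (0 + y)) := hr.hasSum hy
      have h4 : g (0 + y) = (fderiv ℝ F (0 + y)) 1 := hsum3.unique hsum2'
      rw [zero_add] at h4
      rw [fderiv_apply_one_eq_deriv] at h4
      exact h4.symm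
  exact hderiv ▸ hdiff.hasDerivAt

lemma exists_local_inverse {Φ : ℝ → ℝ} (hΦ : AnalyticAt ℝ Φ 0) (hd : deriv Φ 0 = -1) :
    ∃ Z : ℝ → ℝ, AnalyticAt ℝ Z (Φ 0) ∧ Z (Φ 0) = 0 ∧
      (∀ᶠ w in 𝓝 (Φ 0), Φ (Z w) = w) ∧ (∀ᶠ y in 𝓝 (0:ℝ), Z (Φ y) = y) := by
  obtain ⟨p, hp⟩ := hΦ
  have hp1 : p.coeff 1 = -1 := by rw [← hd]; exact hp.deriv.symm
  set i : ℝ ≃L[ℝ] ℝ := ContinuousLinearEquiv.unitsEquivAut ℝ (Units.mk0 (-1 : ℝ) (by norm_num))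
    with hi
  have hicoe : ∀ x : ℝ, (i : ℝ →L[ℝ] ℝ) x = x * (-1) := by
    intro x
    rw [hi]
    simp [ContinuousLinearEquiv.unitsEquivAut_apply]
  have hstrict : HasStrictFDerivAt Φ (i : ℝ →L[ℝ] ℝ) 0 := by
    have h1 : HasStrictDerivAt Φ (-1) 0 := by
      have h := hp.hasStrictDerivAt
      have h0 : ((p 1) fun _ => (1:ℝ)) = -1 := hp1
      rwa [h0] at h
    have h2 : (i : ℝ →L[ℝ] ℝ) = (1 : ℝ →L[ℝ] ℝ).smulRight (-1 : ℝ) := by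
      ext
      simpa using hicoe 1
    rw [h2]
    exact h1
  set phom := hstrict.toOpenPartialHomeomorph Φ with hphom
  have hcoe : ⇑phom = Φ := hstrict.toOpenPartialHomeomorph_coe
  have hsrc : (0:ℝ) ∈ phom.source := hstrict.mem_toOpenPartialHomeomorph_source
  have hp1' : p 1 = (continuousMultilinearCurryFin1 ℝ ℝ ℝ).symm (i : ℝ →L[ℝ] ℝ) := by
    refine ContinuousMultilinearMap.ext fun m => ?_
    have h1 : p 1 m = (∏ j, m j) • p.coeff 1 := p.apply_eq_prod_smul_coeff
    rw [h1, hp1]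
    simp [hicoe]
  have hpsat : HasFPowerSeriesAt (⇑phom) p 0 := by rw [hcoe]; exact hp
  have hsymm := phom.hasFPowerSeriesAt_symm hsrc hpsat hp1'
  have hphi0 : phom 0 = Φ 0 := by rw [hcoe]
  refine ⟨phom.symm, ?_, ?_, ?_, ?_⟩
  · rw [← hphi0]; exact hsymm.analyticAt
  · rw [← hphi0]; exact phom.left_inv hsrc
  · have htgt : phom.target ∈ 𝓝 (Φ 0) := by
      rw [← hphi0]
      exact phom.open_target.mem_nhds (phom.map_source hsrc)
    filter_upwards [htgt] with w hw
    rw [← hcoe]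
    exact phom.right_inv hw
  · have hsrc' : phom.source ∈ 𝓝 (0:ℝ) := phom.open_source.mem_nhds hsrc
    filter_upwards [hsrc'] with y hy
    rw [← hcoe]
    exact phom.left_inv hy

/-- existence of a real analytic solution Z near r = 1,
the normalization Z'(1) = -1 for any solution, and the possibility to
choose I and Z with the additional sign conditions. -/
theorem stmt_1 (m : ℕ) (hm : 2 ≤ m)
    (P Q Phat Qhat : Polynomial ℝ)
    (hPmon : P.Monic) (hPdeg : P.natDegree = m - 1)
    (hQ : ∀ y : ℝ, (derivative Q).eval y = ((m : ℝ) + 1) * y * P.eval y)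
    (hPhat : ∀ x : ℝ, x ≠ 0 → Phat.eval x = x ^ (m - 1) * P.eval (1 / x))
    (hQhat : ∀ x : ℝ, x ≠ 0 → Qhat.eval x = x ^ (m + 1) * Q.eval (1 / x)) :
    (∃ a b : ℝ, 0 ≤ a ∧ (1 : ℝ) ∈ Ioo a b ∧ ∃ Z : ℝ → ℝ,
      AnalyticOnNhd ℝ Z (Ioo a b) ∧
      (∀ r ∈ Ioo a b, r * deriv Z r * Phat.eval (Z r) + Qhat.eval (Z r) = 0) ∧
      Z 1 = 0 ∧
      (∀ r ∈ Ioo a b, deriv Z r < 0) ∧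
      (∀ r ∈ Ioo a b, 0 < Phat.eval (Z r)) ∧
      (∀ r ∈ Ioo a b ∩ Ioo (0 : ℝ) 1, 0 < Z r)) ∧
    (∀ a b : ℝ, 0 ≤ a → (1 : ℝ) ∈ Ioo a b → ∀ Z : ℝ → ℝ,
      AnalyticOnNhd ℝ Z (Ioo a b) →
      (∀ r ∈ Ioo a b, r * deriv Z r * Phat.eval (Z r) + Qhat.eval (Z r) = 0) →
      Z 1 = 0 → deriv Z 1 = -1) := by
  -- basic polynomial facts
  have hP0 : Phat.eval 0 = 1 := by
    rw [hat_eval_zero P Phat (m-1) hPdeg.le hPhat, ← hPdeg]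
    exact hPmon.coeff_natDegree
  have hQfacts := Q_facts m hm P Q hPmon hPdeg hQ
  have hQ0 : Qhat.eval 0 = 1 := by
    rw [hat_eval_zero Q Qhat (m+1) hQfacts.1 hQhat]
    exact hQfacts.2
  constructor
  · -- existence
    set g : ℝ → ℝ := fun x => Phat.eval x / Qhat.eval x with hgdef
    have hPanal : AnalyticAt ℝ (fun x : ℝ => Phat.eval x) 0 := by
      simpa using (analyticAt_id (𝕜 := ℝ) (z := (0:ℝ))).aeval_polynomial Phat
    have hQanal : AnalyticAt ℝ (fun x : ℝ => Qhat.eval x) 0 := by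
      simpa using (analyticAt_id (𝕜 := ℝ) (z := (0:ℝ))).aeval_polynomial Qhat
    have hganal : AnalyticAt ℝ g 0 := hPanal.div hQanal (by rw [hQ0]; norm_num)
    have hg0 : g 0 = 1 := by simp [hgdef, hP0, hQ0]
    obtain ⟨F, hFanal, hF0, hFderiv⟩ := exists_antideriv hganal
    set Φ : ℝ → ℝ := fun y => Real.exp (-F y) with hΦdef
    have hΦanal : AnalyticAt ℝ Φ 0 := AnalyticAt.rexp hFanal.neg
    have hΦ0 : Φ 0 = 1 := by simp [hΦdef, hF0]
    have hΦderiv : ∀ᶠ y in 𝓝 (0:ℝ), HasDerivAt Φ (-(g y) * Φ y) y := by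
      filter_upwards [hFderiv] with y hy
      have h := (hy.neg).exp
      convert h using 1
      simp [hΦdef]
      exact mul_comm _ _
    have hd0 : deriv Φ 0 = -1 := by
      have h := hΦderiv.self_of_nhds.deriv
      rw [h, hg0, hΦ0]
      norm_num
    obtain ⟨Z, hZanal, hZ10, hright, hleft⟩ := exists_local_inverse hΦanal hd0
    rw [hΦ0] at hZanal hZ10 hright
    -- eventual conditions near 0 (for the argument of functions of Z r)
    have hUP : {y : ℝ | 0 < Phat.eval y} ∈ 𝓝 (0:ℝ) :=
      (isOpen_lt continuous_const (Phat.continuous_aeval)).mem_nhds (by simp [hP0])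
    have hUQ : {y : ℝ | 0 < Qhat.eval y} ∈ 𝓝 (0:ℝ) :=
      (isOpen_lt continuous_const (Qhat.continuous_aeval)).mem_nhds (by simp [hQ0])
    have hU : ∀ᶠ y in 𝓝 (0:ℝ),
        HasDerivAt Φ (-(g y) * Φ y) y ∧ 0 < Phat.eval y ∧ 0 < Qhat.eval y :=
      hΦderiv.and ((eventually_iff_exists_mem.mpr ⟨_, hUP, fun y hy => hy⟩).and
        (eventually_iff_exists_mem.mpr ⟨_, hUQ, fun y hy => hy⟩))
    -- eventual conditions near 1
    have hZtend : Filter.Tendsto Z (𝓝 1) (𝓝 (0:ℝ)) := by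
      have := hZanal.continuousAt.tendsto
      rwa [hZ10] at this
    have e123 : ∀ᶠ r in 𝓝 (1:ℝ), Φ (Z r) = r ∧ AnalyticAt ℝ Z r ∧
        (HasDerivAt Φ (-(g (Z r)) * Φ (Z r)) (Z r) ∧ 0 < Phat.eval (Z r) ∧
          0 < Qhat.eval (Z r)) :=
      hright.and (hZanal.eventually_analyticAt.and (hZtend.eventually hU))
    obtain ⟨a', b', h1ab', hsub⟩ := mem_nhds_iff_exists_Ioo_subset.mp e123
    set a := max a' (1/2 : ℝ) with hadef
    set b := b' with hbdef
    have h1ab : (1:ℝ) ∈ Ioo a b := by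
      constructor
      · exact max_lt h1ab'.1 (by norm_num)
      · exact h1ab'.2
    have hIoosub : Ioo a b ⊆ Ioo a' b' := fun r hr => ⟨lt_of_le_of_lt (le_max_left _ _) hr.1, hr.2⟩
    have hprops : ∀ r ∈ Ioo a b, Φ (Z r) = r ∧ AnalyticAt ℝ Z r ∧
        (HasDerivAt Φ (-(g (Z r)) * Φ (Z r)) (Z r) ∧ 0 < Phat.eval (Z r) ∧
          0 < Qhat.eval (Z r)) := fun r hr => hsub (hIoosub hr)
    have hrpos : ∀ r ∈ Ioo a b, (0:ℝ) < r := fun r hr =>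
      lt_of_lt_of_le (by norm_num) (le_trans (le_max_right a' (1/2)) hr.1.le)
    -- the key derivative identity
    have hkey : ∀ r ∈ Ioo a b, -(g (Z r)) * r * deriv Z r = 1 := by
      intro r hr
      obtain ⟨hr1, hr2, hr3, hr4, hr5⟩ := hprops r hr
      have hZd : HasDerivAt Z (deriv Z r) r := hr2.differentiableAt.hasDerivAt
      have hcomp : HasDerivAt (Φ ∘ Z) (-(g (Z r)) * Φ (Z r) * deriv Z r) r := hr3.comp r hZd
      have hid : HasDerivAt (Φ ∘ Z) 1 r := by
        have hev : Φ ∘ Z =ᶠ[𝓝 r] id := by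
          filter_upwards [isOpen_Ioo.mem_nhds hr] with s hs
          exact (hprops s hs).1
        exact (hasDerivAt_id r).congr_of_eventuallyEq hev
      have := hcomp.unique hid
      rw [hr1] at this
      linarith [this]
    have hODE : ∀ r ∈ Ioo a b, r * deriv Z r * Phat.eval (Z r) + Qhat.eval (Z r) = 0 := by
      intro r hr
      obtain ⟨hr1, hr2, hr3, hr4, hr5⟩ := hprops r hr
      have h := hkey r hr
      rw [hgdef] at h
      have hQne : Qhat.eval (Z r) ≠ 0 := ne_of_gt hr5
      field_simp at h
      nlinarith [h]
    have hderivneg : ∀ r ∈ Ioo a b, deriv Z r < 0 := by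
      intro r hr
      obtain ⟨hr1, hr2, hr3, hr4, hr5⟩ := hprops r hr
      have h := hODE r hr
      by_contra hcon
      push_neg at hcon
      have h1 : 0 ≤ r * deriv Z r * Phat.eval (Z r) :=
        mul_nonneg (mul_nonneg (hrpos r hr).le hcon) hr4.le
      linarith
    have hZana : AnalyticOnNhd ℝ Z (Ioo a b) := fun r hr => (hprops r hr).2.1
    refine ⟨a, b, le_trans (by norm_num) (le_max_right a' (1/2:ℝ)), h1ab, Z, hZana, hODE, hZ10,
      hderivneg, fun r hr => (hprops r hr).2.2.2.1, ?_⟩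
    intro r ⟨hr, hr01⟩
    have hanti : StrictAntiOn Z (Ioo a b) := by
      apply strictAntiOn_of_deriv_neg (convex_Ioo a b)
      · exact fun s hs => ((hprops s hs).2.1).continuousAt.continuousWithinAt
      · intro s hs
        rw [interior_Ioo] at hs
        exact hderivneg s hs
    have := hanti hr h1ab hr01.2
    rwa [hZ10] at this
  · -- normalization
    intro a b ha hab Z _hZana hODE hZ1
    have h := hODE 1 hab
    rw [hZ1, hP0, hQ0] at h
    linarith
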